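/- Let G be a graph with N vertices and pN²/2 edges, and let n ≥ 1 be an integer. Call a vertex v of G 'bad with respect to k' if the number of sequences of k vertices in N(v) whose common neighborhood has size at most (2n)^{-n-1} p^k N is at least (1/(2n))|N(v)|^k, and call v 'good' if it is not bad with respect to any k with 1 ≤ k ≤ n. Then the sum of the degrees of the good vertices of G is at least pN²/2. -/

import Mathlib

open Finset
open scoped Classical

set_option maxHeartbeats 1000000 in
/-- Double counting helper: swapping the roles in a count of pairs. -/
lemma swap_count {α β : Type*} [Fintype α] [Fintype β] (Q : α → β → Prop)
    [∀ a b, Decidable (Q a b)] :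
    ∑ a : α, (Finset.univ.filter (fun b => Q a b)).card
      = ∑ b : β, (Finset.univ.filter (fun a => Q a b)).card := by
  simp only [Finset.card_filter]
  exact Finset.sum_comm

set_option maxHeartbeats 1000000 in
/-- dependent random choice: the sum of degrees of good vertices
is at least `p N^2 / 2`. -/
theorem stmt0 {V : Type*} [Fintype V] (G : SimpleGraph V)
    (N n : ℕ) (p : ℝ) (hN : Fintype.card V = N) (hn : 1 ≤ n)
    (he : (G.edgeFinset.card : ℝ) = p * N ^ 2 / 2)
    (bad : V → ℕ → Prop)
    (hbad : ∀ v k, bad v k ↔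
      (1 / (2 * (n : ℝ))) * (G.degree v : ℝ) ^ k ≤
        ((Finset.univ.filter (fun S : Fin k → V =>
          (∀ i, S i ∈ G.neighborFinset v) ∧
          (((Finset.univ.filter (fun w => ∀ i, G.Adj (S i) w)).card : ℝ) ≤
            p ^ k * N / (2 * (n : ℝ)) ^ (n + 1)))).card : ℝ)) :
    p * N ^ 2 / 2 ≤
      ∑ v ∈ Finset.univ.filter (fun v => ∀ k, 1 ≤ k → k ≤ n → ¬ bad v k),
        (G.degree v : ℝ) := by
  classical
  have hn1 : (1 : ℝ) ≤ (n : ℝ) := by exact_mod_cast hn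
  have hn2 : (0 : ℝ) < 2 * n := by linarith
  have h2n1 : (1 : ℝ) ≤ 2 * n := by linarith
  -- degree sum formula
  have hdeg2 : ∑ v, (G.degree v : ℝ) = p * N ^ 2 := by
    have h := G.sum_degrees_eq_twice_card_edges
    have h' : (∑ v, (G.degree v : ℝ)) = 2 * (G.edgeFinset.card : ℝ) := by
      exact_mod_cast h
    rw [h', he]; ring
  rcases Nat.eq_zero_or_pos N with hN0 | hNpos
  · subst hN0
    have hV : IsEmpty V := Fintype.card_eq_zero_iff.mp hN
    simp
  have hNpos' : (0 : ℝ) < (N : ℝ) := by exact_mod_cast hNpos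
  have hp : 0 ≤ p := by
    nlinarith [Nat.cast_nonneg (α := ℝ) G.edgeFinset.card, he, pow_pos hNpos' 2]
  -- key per-k bound
  have key : ∀ k, 1 ≤ k → k ≤ n →
      ∑ v ∈ univ.filter (fun v => bad v k), (G.degree v : ℝ) ≤ p * N ^ 2 / (2 * n) := by
    intro k hk1 hkn
    set T : ℝ := p ^ k * N / (2 * (n : ℝ)) ^ (n + 1) with hTdef
    have hT0 : 0 ≤ T := by
      apply div_nonneg (mul_nonneg (pow_nonneg hp k) (Nat.cast_nonneg N))
      positivity
    set Bk := univ.filter (fun v => bad v k) with hBkdef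
    -- double counting
    have hswap0 : ∑ v : V, (Finset.univ.filter (fun S : Fin k → V =>
          (∀ i, S i ∈ G.neighborFinset v) ∧
          (((Finset.univ.filter (fun w => ∀ i, G.Adj (S i) w)).card : ℝ) ≤ T))).card
        = ∑ S : Fin k → V, (Finset.univ.filter (fun v : V =>
          (∀ i, S i ∈ G.neighborFinset v) ∧
          (((Finset.univ.filter (fun w => ∀ i, G.Adj (S i) w)).card : ℝ) ≤ T))).card :=
      swap_count (fun (v : V) (S : Fin k → V) =>
        (∀ i, S i ∈ G.neighborFinset v) ∧
        (((Finset.univ.filter (fun w => ∀ i, G.Adj (S i) w)).card : ℝ) ≤ T))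
    have hterm : ∀ S : Fin k → V,
        ((Finset.univ.filter (fun v : V =>
          (∀ i, S i ∈ G.neighborFinset v) ∧
          (((Finset.univ.filter (fun w => ∀ i, G.Adj (S i) w)).card : ℝ) ≤ T))).card : ℝ)
          ≤ T := by
      intro S
      by_cases hB : ((Finset.univ.filter (fun w => ∀ i, G.Adj (S i) w)).card : ℝ) ≤ T
      · have h3 : Finset.univ.filter (fun v : V =>
            (∀ i, S i ∈ G.neighborFinset v) ∧
            (((Finset.univ.filter (fun w => ∀ i, G.Adj (S i) w)).card : ℝ) ≤ T))
            = Finset.univ.filter (fun w => ∀ i, G.Adj (S i) w) := by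
          apply Finset.filter_congr
          intro v _
          constructor
          · intro h i; exact ((G.mem_neighborFinset v (S i)).mp (h.1 i)).symm
          · intro h; exact ⟨fun i => (G.mem_neighborFinset v (S i)).mpr (h i).symm, hB⟩
        rw [h3]; exact hB
      · have h4 : Finset.univ.filter (fun v : V =>
            (∀ i, S i ∈ G.neighborFinset v) ∧
            (((Finset.univ.filter (fun w => ∀ i, G.Adj (S i) w)).card : ℝ) ≤ T))
            = ∅ := by
          apply Finset.filter_false_of_mem
          intro v _ h
          exact hB h.2
        rw [h4]; simpa using hT0
    have hswap : ∑ v : V, ((Finset.univ.filter (fun S : Fin k → V =>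
          (∀ i, S i ∈ G.neighborFinset v) ∧
          (((Finset.univ.filter (fun w => ∀ i, G.Adj (S i) w)).card : ℝ) ≤ T))).card : ℝ)
        ≤ (N : ℝ) ^ k * T := by
      calc ∑ v : V, ((Finset.univ.filter (fun S : Fin k → V =>
            (∀ i, S i ∈ G.neighborFinset v) ∧
            (((Finset.univ.filter (fun w => ∀ i, G.Adj (S i) w)).card : ℝ) ≤ T))).card : ℝ)
          = ∑ S : Fin k → V, ((Finset.univ.filter (fun v : V =>
            (∀ i, S i ∈ G.neighborFinset v) ∧
            (((Finset.univ.filter (fun w => ∀ i, G.Adj (S i) w)).card : ℝ) ≤ T))).card : ℝ) := by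
            exact_mod_cast congrArg (Nat.cast (R := ℝ)) hswap0
        _ ≤ ∑ _S : Fin k → V, T := Finset.sum_le_sum (fun S _ => hterm S)
        _ = (Fintype.card (Fin k → V) : ℝ) * T := by
            rw [Finset.sum_const, nsmul_eq_mul, Finset.card_univ]
        _ = (N : ℝ) ^ k * T := by
            rw [Fintype.card_fun, hN, Fintype.card_fin]; push_cast; ring
    -- step A : sum of deg^k over Bk
    have hA : ∑ v ∈ Bk, (G.degree v : ℝ) ^ k ≤ 2 * n * ((N : ℝ) ^ k * T) := by
      have h1 : ∀ v ∈ Bk, (G.degree v : ℝ) ^ k ≤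
          2 * n * ((Finset.univ.filter (fun S : Fin k → V =>
            (∀ i, S i ∈ G.neighborFinset v) ∧
            (((Finset.univ.filter (fun w => ∀ i, G.Adj (S i) w)).card : ℝ) ≤ T))).card : ℝ) := by
        intro v hv
        have hb : bad v k := (Finset.mem_filter.mp hv).2
        have h := (hbad v k).mp hb
        rw [one_div_mul_eq_div, div_le_iff₀ hn2] at h
        calc (G.degree v : ℝ) ^ k
            ≤ ((Finset.univ.filter (fun S : Fin k → V =>
              (∀ i, S i ∈ G.neighborFinset v) ∧
              (((Finset.univ.filter (fun w => ∀ i, G.Adj (S i) w)).card : ℝ) ≤ T))).card : ℝ)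
              * (2 * n) := h
          _ = 2 * n * _ := by ring
      calc ∑ v ∈ Bk, (G.degree v : ℝ) ^ k
          ≤ ∑ v ∈ Bk, 2 * n * ((Finset.univ.filter (fun S : Fin k → V =>
              (∀ i, S i ∈ G.neighborFinset v) ∧
              (((Finset.univ.filter (fun w => ∀ i, G.Adj (S i) w)).card : ℝ) ≤ T))).card : ℝ) :=
            Finset.sum_le_sum h1
        _ ≤ ∑ v : V, 2 * n * ((Finset.univ.filter (fun S : Fin k → V =>
              (∀ i, S i ∈ G.neighborFinset v) ∧
              (((Finset.univ.filter (fun w => ∀ i, G.Adj (S i) w)).card : ℝ) ≤ T))).card : ℝ) := by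
            apply Finset.sum_le_sum_of_subset_of_nonneg (Finset.subset_univ _)
            intro v _ _; positivity
        _ = 2 * n * ∑ v : V, ((Finset.univ.filter (fun S : Fin k → V =>
              (∀ i, S i ∈ G.neighborFinset v) ∧
              (((Finset.univ.filter (fun w => ∀ i, G.Adj (S i) w)).card : ℝ) ≤ T))).card : ℝ) := by
            rw [Finset.mul_sum]
        _ ≤ 2 * n * ((N : ℝ) ^ k * T) := mul_le_mul_of_nonneg_left hswap (le_of_lt hn2)
    -- step C : Jensen and conclude
    rcases Finset.eq_empty_or_nonempty Bk with hBe | hBne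
    · rw [hBe]
      simp only [Finset.sum_empty]
      exact div_nonneg (mul_nonneg hp (by positivity)) (le_of_lt hn2)
    · have hRHSnn : 0 ≤ p * N ^ 2 / (2 * n) :=
        div_nonneg (mul_nonneg hp (by positivity)) (le_of_lt hn2)
      apply le_of_pow_le_pow_left₀ (Nat.one_le_iff_ne_zero.mp hk1) hRHSnn
      obtain ⟨k', rfl⟩ : ∃ k', k = k' + 1 := ⟨k - 1, (Nat.succ_pred_eq_of_pos hk1).symm⟩
      have hpm := pow_sum_div_card_le_sum_pow (s := Bk)
        (f := fun v => (G.degree v : ℝ)) (fun i _ => Nat.cast_nonneg _) k'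
      have hcardpos : (0 : ℝ) < (Bk.card : ℝ) ^ k' := by
        have : 0 < Bk.card := Finset.card_pos.mpr hBne
        positivity
      rw [div_le_iff₀ hcardpos] at hpm
      have hcardle : ((Bk.card : ℝ)) ^ k' ≤ (N : ℝ) ^ k' := by
        apply pow_le_pow_left₀ (Nat.cast_nonneg _)
        have h5 := Finset.card_le_univ Bk
        rw [Fintype.card_eq_nat_card] at h5
        rw [Nat.card_eq_fintype_card, hN] at h5
        exact_mod_cast h5
      have step1 : (∑ v ∈ Bk, (G.degree v : ℝ)) ^ (k' + 1)
          ≤ (N : ℝ) ^ k' * (2 * n * ((N : ℝ) ^ (k' + 1) * T)) := by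
        have hAnn : 0 ≤ 2 * (n : ℝ) * ((N : ℝ) ^ (k' + 1) * T) := by positivity
        calc (∑ v ∈ Bk, (G.degree v : ℝ)) ^ (k' + 1)
            ≤ (∑ v ∈ Bk, (G.degree v : ℝ) ^ (k' + 1)) * (Bk.card : ℝ) ^ k' := hpm
          _ ≤ (2 * n * ((N : ℝ) ^ (k' + 1) * T)) * (N : ℝ) ^ k' :=
              mul_le_mul hA hcardle (le_of_lt hcardpos) hAnn
          _ = (N : ℝ) ^ k' * (2 * n * ((N : ℝ) ^ (k' + 1) * T)) := by ring
      have h2npowk : (0 : ℝ) < (2 * (n : ℝ)) ^ (k' + 1) := by positivity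
      have step2 : (N : ℝ) ^ k' * (2 * n * ((N : ℝ) ^ (k' + 1) * T))
          = p ^ (k' + 1) * (N : ℝ) ^ (2 * (k' + 1)) / (2 * (n : ℝ)) ^ n := by
        rw [hTdef, pow_succ ((2 : ℝ) * n) n]
        have h1 : ((2 : ℝ) * n) ^ n ≠ 0 := by positivity
        field_simp
        ring
      have step3 : p ^ (k' + 1) * (N : ℝ) ^ (2 * (k' + 1)) / (2 * (n : ℝ)) ^ n
          ≤ p ^ (k' + 1) * (N : ℝ) ^ (2 * (k' + 1)) / (2 * (n : ℝ)) ^ (k' + 1) := by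
        apply div_le_div_of_nonneg_left _ h2npowk (pow_le_pow_right₀ h2n1 hkn)
        positivity
      have step4 : p ^ (k' + 1) * (N : ℝ) ^ (2 * (k' + 1)) / (2 * (n : ℝ)) ^ (k' + 1)
          = (p * (N : ℝ) ^ 2 / (2 * n)) ^ (k' + 1) := by
        rw [pow_mul, div_pow, mul_pow, mul_pow]
      calc (∑ v ∈ Bk, (G.degree v : ℝ)) ^ (k' + 1)
          ≤ (N : ℝ) ^ k' * (2 * n * ((N : ℝ) ^ (k' + 1) * T)) := step1
        _ = p ^ (k' + 1) * (N : ℝ) ^ (2 * (k' + 1)) / (2 * (n : ℝ)) ^ n := step2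
        _ ≤ p ^ (k' + 1) * (N : ℝ) ^ (2 * (k' + 1)) / (2 * (n : ℝ)) ^ (k' + 1) := step3
        _ = (p * (N : ℝ) ^ 2 / (2 * n)) ^ (k' + 1) := step4
  -- aggregate over k
  have hbadsum : ∑ v ∈ univ.filter (fun v => ∃ k, 1 ≤ k ∧ k ≤ n ∧ bad v k),
      (G.degree v : ℝ) ≤ p * N ^ 2 / 2 := by
    have h1 : ∀ v ∈ univ.filter (fun v => ∃ k, 1 ≤ k ∧ k ≤ n ∧ bad v k),
        (G.degree v : ℝ) ≤ ∑ k ∈ Finset.Icc 1 n,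
          (if bad v k then (G.degree v : ℝ) else 0) := by
      intro v hv
      obtain ⟨k, hk1, hkn, hbk⟩ := (Finset.mem_filter.mp hv).2
      have hkmem : k ∈ Finset.Icc 1 n := Finset.mem_Icc.mpr ⟨hk1, hkn⟩
      calc (G.degree v : ℝ) = (if bad v k then (G.degree v : ℝ) else 0) := by
            rw [if_pos hbk]
        _ ≤ ∑ k ∈ Finset.Icc 1 n, (if bad v k then (G.degree v : ℝ) else 0) := by
            apply Finset.single_le_sum _ hkmem
            intro i _
            split <;> positivity
    calc ∑ v ∈ univ.filter (fun v => ∃ k, 1 ≤ k ∧ k ≤ n ∧ bad v k), (G.degree v : ℝ)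
        ≤ ∑ v ∈ univ.filter (fun v => ∃ k, 1 ≤ k ∧ k ≤ n ∧ bad v k),
            ∑ k ∈ Finset.Icc 1 n, (if bad v k then (G.degree v : ℝ) else 0) :=
          Finset.sum_le_sum h1
      _ ≤ ∑ v : V, ∑ k ∈ Finset.Icc 1 n, (if bad v k then (G.degree v : ℝ) else 0) := by
          apply Finset.sum_le_sum_of_subset_of_nonneg (Finset.subset_univ _)
          intro v _ _
          apply Finset.sum_nonneg
          intro i _
          split <;> positivity
      _ = ∑ k ∈ Finset.Icc 1 n, ∑ v : V, (if bad v k then (G.degree v : ℝ) else 0) :=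
          Finset.sum_comm
      _ = ∑ k ∈ Finset.Icc 1 n, ∑ v ∈ univ.filter (fun v => bad v k), (G.degree v : ℝ) := by
          apply Finset.sum_congr rfl
          intro k _
          rw [Finset.sum_filter]
      _ ≤ ∑ k ∈ Finset.Icc 1 n, p * N ^ 2 / (2 * n) := by
          apply Finset.sum_le_sum
          intro k hk
          obtain ⟨hk1, hkn⟩ := Finset.mem_Icc.mp hk
          exact key k hk1 hkn
      _ = p * N ^ 2 / 2 := by
          rw [Finset.sum_const, Nat.card_Icc]
          simp only [Nat.add_sub_cancel, nsmul_eq_mul]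
          have hnne : (n : ℝ) ≠ 0 := by linarith
          field_simp
  have hsplit : ∑ v, (G.degree v : ℝ) ≤
      (∑ v ∈ univ.filter (fun v => ∀ k, 1 ≤ k → k ≤ n → ¬ bad v k), (G.degree v : ℝ))
      + ∑ v ∈ univ.filter (fun v => ∃ k, 1 ≤ k ∧ k ≤ n ∧ bad v k), (G.degree v : ℝ) := by
    rw [Finset.sum_filter, Finset.sum_filter, ← Finset.sum_add_distrib]
    apply Finset.sum_le_sum
    intro v _
    by_cases h : ∀ k, 1 ≤ k → k ≤ n → ¬ bad v k
    · rw [if_pos h]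
      have : (0:ℝ) ≤ (if ∃ k, 1 ≤ k ∧ k ≤ n ∧ bad v k then (G.degree v : ℝ) else 0) := by
        split <;> positivity
      linarith
    · push_neg at h
      obtain ⟨k, hk1, hkn, hbk⟩ := h
      have h2 : ∃ k, 1 ≤ k ∧ k ≤ n ∧ bad v k := ⟨k, hk1, hkn, hbk⟩
      rw [if_pos h2]
      have : (0:ℝ) ≤ (if ∀ k, 1 ≤ k → k ≤ n → ¬ bad v k then (G.degree v : ℝ) else 0) := by
        split <;> positivity
      linarith
  rw [hdeg2] at hsplit
  linarith
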